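/- Leave-one-out consistency lemma: Fix k. Let W₁,…,W_N be n×n matrices with W_k positive definite, let P : ℝⁿ → ℝ be any function, and let y₁,…,y_N ∈ ℝⁿ. Define S⁻ᵏ(g) = -(1/2)·∑_{r≠k} (y_r - g)ᵀ W_r (y_r - g) + P(g) and suppose f⁻ᵏ maximizes S⁻ᵏ over ℝⁿ. Define S*ᵏ(g) = -(1/2)(f⁻ᵏ - g)ᵀ W_k (f⁻ᵏ - g) - (1/2)∑_{r≠k}(y_r - g)ᵀ W_r (y_r - g) + P(g) and suppose f*ᵏ maximizes S*ᵏ over ℝⁿ. Then f*ᵏ = f⁻ᵏ. -/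

import Mathlib

open Matrix Finset

theorem stmt_1 {n N : ℕ} (k : Fin N)
    (W : Fin N → Matrix (Fin n) (Fin n) ℝ) (hWk : (W k).PosDef)
    (P : (Fin n → ℝ) → ℝ) (y : Fin N → Fin n → ℝ)
    (fmk fsk : Fin n → ℝ)
    (hfmk : ∀ g : Fin n → ℝ,
      -(1/2) * ∑ r ∈ univ.erase k, (y r - g) ⬝ᵥ ((W r) *ᵥ (y r - g)) + P g ≤
      -(1/2) * ∑ r ∈ univ.erase k, (y r - fmk) ⬝ᵥ ((W r) *ᵥ (y r - fmk)) + P fmk)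
    (hfsk : ∀ g : Fin n → ℝ,
      -(1/2) * ((fmk - g) ⬝ᵥ ((W k) *ᵥ (fmk - g)))
        - (1/2) * ∑ r ∈ univ.erase k, (y r - g) ⬝ᵥ ((W r) *ᵥ (y r - g)) + P g ≤
      -(1/2) * ((fmk - fsk) ⬝ᵥ ((W k) *ᵥ (fmk - fsk)))
        - (1/2) * ∑ r ∈ univ.erase k, (y r - fsk) ⬝ᵥ ((W r) *ᵥ (y r - fsk)) + P fsk) :
    fsk = fmk := by
  by_contra h
  have hne : fmk - fsk ≠ 0 := sub_ne_zero_of_ne (Ne.symm h)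
  have hq : 0 < (fmk - fsk) ⬝ᵥ ((W k) *ᵥ (fmk - fsk)) := by
    have := hWk.dotProduct_mulVec_pos hne
    simpa using this
  have h1 := hfsk fmk
  have h2 := hfmk fsk
  simp only [sub_self, Matrix.mulVec_zero, dotProduct_zero, mul_zero, neg_zero, zero_sub] at h1
  linarith
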